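/- arXiv:2406.18473 — 3 statements merged into one kernel-verified Lean document; each statement's English description precedes it below -/
import Mathlib

section
/- Let w be an inverse Lyndon word and ℓ an anti-Lyndon word. If ℓ ≪ w, then for every k ≥ 1 the word ℓ^k w is not an inverse Lyndon word. -/
open List

variable {α : Type*} [LinearOrder α]

/-- `x ≺ y`: lexicographic order on words. -/
def Prec (x y : List α) : Prop := List.Lex (· < ·) x y

/-- Lexicographic order induced by the inverse alphabet order. -/
def PrecIn (x y : List α) : Prop := List.Lex (fun a b : α => b < a) x y

/-- `x ≪ y`: `x ≺ y` and `x` is not a proper prefix of `y`. -/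
def LLt (x y : List α) : Prop := Prec x y ∧ ¬ (x <+: y ∧ x ≠ y)

/-- `b` is a border of `w`: a proper prefix and a suffix of `w`. -/
def IsBorder (b w : List α) : Prop := b <+: w ∧ b ≠ w ∧ b <:+ w

/-- `w` has no nonempty border. -/
def Unbordered (w : List α) : Prop := ∀ b : List α, b ≠ [] → ¬ IsBorder b w

/-- Lyndon word: smaller than each nonempty proper suffix. -/
def IsLyndon (w : List α) : Prop :=
  w ≠ [] ∧ ∀ s : List α, s <:+ w → s ≠ w → s ≠ [] → Prec w s

/-- Anti-Lyndon word: Lyndon w.r.t. the inverse lexicographic order. -/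
def IsAntiLyndon (w : List α) : Prop :=
  w ≠ [] ∧ ∀ s : List α, s <:+ w → s ≠ w → s ≠ [] → PrecIn w s

/-- Inverse Lyndon word: each nonempty proper suffix is smaller. -/
def IsInvLyndon (w : List α) : Prop :=
  w ≠ [] ∧ ∀ s : List α, s <:+ w → s ≠ w → s ≠ [] → Prec s w

/-- Inverse Lyndon factorization of `w`. -/
def IsInvLyndonFact (ms : List (List α)) (w : List α) : Prop :=
  ms ≠ [] ∧ ms.flatten = w ∧ (∀ m ∈ ms, IsInvLyndon m) ∧ List.Chain' LLt ms

/-- The border property of a factorization. -/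
def BorderProp (ms : List (List α)) : Prop :=
  List.Chain' (fun u v => ∀ b : List α, b ≠ [] → IsBorder b u → ¬ b <+: v) ms

lemma prec_append_of_not_prefix {x y : List α} (hx : Prec x y) (hnp : ¬ x <+: y)
    (z : List α) : Prec (x ++ z) y := by
  induction hx with
  | nil => exact absurd List.nil_prefix hnp
  | @cons a l₁ l₂ h ih =>
      exact List.Lex.cons (ih (fun hp => hnp (List.cons_prefix_cons.mpr ⟨rfl, hp⟩)))
  | rel h => exact List.Lex.rel h

lemma prec_asymm {x y : List α} (hx : Prec x y) (hy : Prec y x) : False := by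
  induction hx with
  | nil => cases hy
  | @cons a l₁ l₂ h ih =>
      cases hy with
      | cons h' => exact ih h'
      | rel h' => exact lt_irrefl _ h'
  | @rel a b l₁ l₂ h =>
      cases hy with
      | cons h' => exact lt_irrefl _ h
      | rel h' => exact lt_asymm h h'

lemma prec_ne {x y : List α} (hx : Prec x y) : x ≠ y := by
  rintro rfl
  exact prec_asymm hx hx

theorem stmt10 (w l : List α) (hw : IsInvLyndon w) (hl : IsAntiLyndon l)
    (h : LLt l w) :
    ∀ k : ℕ, 1 ≤ k → ¬ IsInvLyndon ((List.replicate k l).flatten ++ w) := by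
  intro k hk hcon
  have hnp : ¬ l <+: w := fun hp => h.2 ⟨hp, prec_ne h.1⟩
  obtain ⟨n, rfl⟩ : ∃ n, k = n + 1 := ⟨k - 1, by omega⟩
  have hjoin : (List.replicate (n + 1) l).flatten ++ w
      = l ++ ((List.replicate n l).flatten ++ w) := by
    simp [List.replicate_succ]
  have hwhole : Prec ((List.replicate (n + 1) l).flatten ++ w) w := by
    rw [hjoin]
    exact prec_append_of_not_prefix h.1 hnp _
  have hne : w ≠ (List.replicate (n + 1) l).flatten ++ w := by
    intro heq
    have h0 : (List.replicate (n + 1) l).flatten = [] := by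
      have hlen := congrArg List.length heq
      simp only [List.length_append] at hlen
      have : (List.replicate (n + 1) l).flatten.length = 0 := by omega
      exact List.length_eq_zero_iff.mp this
    have : l ++ (List.replicate n l).flatten = [] := by
      simpa [List.replicate_succ] using h0
    exact hl.1 (List.append_eq_nil_iff.mp this).1
  exact prec_asymm (hcon.2 w ⟨(List.replicate (n + 1) l).flatten, rfl⟩ hne hw.1) hwhole
end

section
/- Let w be a word that is not an inverse Lyndon word, and let z be its shortest nonempty prefix that is not an inverse Lyndon word. Then z can be written z = rasrb with letters a < b and words r, s, where r is the shortest prefix of z admitting such a decomposition; moreover in this decomposition the word rb is an inverse Lyndon word. -/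
open List

variable {α : Type*} [LinearOrder α]

omit [LinearOrder α] in
lemma lex_of_prefix_ne {r : α → α → Prop} {x y : List α} (h : x <+: y) (hne : x ≠ y) :
    List.Lex r x y := by
  obtain ⟨t, rfl⟩ := h
  have ht : t ≠ [] := by rintro rfl; simp at hne
  clear hne
  induction x with
  | nil => cases t with
    | nil => exact absurd rfl ht
    | cons c t => exact List.Lex.nil
  | cons a s ih => exact List.Lex.cons ih

omit [LinearOrder α] in
lemma lex_append_cons {r : α → α → Prop} {a b : α} (p : List α) (h : r a b) (s t : List α) :
    List.Lex r (p ++ a :: s) (p ++ b :: t) := by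
  induction p with
  | nil => exact List.Lex.rel h
  | cons c q ih => exact List.Lex.cons ih

omit [LinearOrder α] in
lemma lex_cases {r : α → α → Prop} {x y : List α} (h : List.Lex r x y) :
    (x <+: y ∧ x ≠ y) ∨ ∃ p a b s t, x = p ++ a :: s ∧ y = p ++ b :: t ∧ r a b := by
  induction h with
  | @nil a l => exact Or.inl ⟨⟨a :: l, rfl⟩, by simp⟩
  | @rel a l₁ b l₂ hr => exact Or.inr ⟨[], a, b, l₁, l₂, rfl, rfl, hr⟩
  | @cons a l₁ l₂ h ih =>
    rcases ih with ⟨⟨t, rfl⟩, hne⟩ | ⟨p, c, d, s, t, h1, h2, h3⟩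
    · exact Or.inl ⟨⟨t, rfl⟩, by simpa using hne⟩
    · exact Or.inr ⟨a :: p, c, d, s, t, by simp [h1], by simp [h2], h3⟩

theorem stmt14 (w z : List α) (hw : w ≠ []) (hwn : ¬ IsInvLyndon w)
    (hz : z <+: w) (hzne : z ≠ []) (hzn : ¬ IsInvLyndon z)
    (hmin : ∀ p : List α, p <+: w → p ≠ [] → ¬ IsInvLyndon p → z.length ≤ p.length) :
    ∃ (r s : List α) (a b : α), a < b ∧
      z = r ++ [a] ++ s ++ r ++ [b] ∧
      (∀ (r' s' : List α) (a' b' : α), a' < b' →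
        z = r' ++ [a'] ++ s' ++ r' ++ [b'] → r.length ≤ r'.length) ∧
      IsInvLyndon (r ++ [b]) := by
  classical
  -- every nonempty proper prefix of z is inverse Lyndon
  have hprefIL : ∀ p : List α, p <+: z → p ≠ z → p ≠ [] → IsInvLyndon p := by
    intro p hp hne hnil
    by_contra h
    have h1 := hmin p (hp.trans hz) hnil h
    have h2 := hp.length_le
    have h3 : p.length ≠ z.length := fun he => hne (hp.eq_of_length he)
    omega
  -- key structural lemma: any bad suffix has the form p ++ [b] with p ++ [a] a prefix of z
  have hkey : ∀ u : List α, u <:+ z → u ≠ z → u ≠ [] → List.Lex (· < ·) z u →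
      ∃ p a b, u = p ++ [b] ∧ a < b ∧ p ++ [a] <+: z := by
    intro u hsu hune hunil hlex
    rcases lex_cases hlex with ⟨hp, hne⟩ | ⟨p, a, b, s, t, hz1, hu1, hab⟩
    · exact absurd (hsu.eq_of_length (le_antisymm hsu.length_le hp.length_le)) hune
    · cases t with
      | nil => exact ⟨p, a, b, by simpa using hu1, hab, ⟨s, by simp [hz1]⟩⟩
      | cons c t' =>
        exfalso
        obtain ⟨x, hx⟩ := hsu
        have hxne : x ≠ [] := by rintro rfl; simp at hx; exact hune hx
        have hxlen : 1 ≤ x.length := List.length_pos_iff.mpr hxne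
        have hz'p : (x ++ p ++ [b]) <+: z := ⟨c :: t', by rw [← hx, hu1]; simp⟩
        have hz'ne : (x ++ p ++ [b]) ≠ z := by
          intro h
          have h' := congrArg List.length h
          rw [← hx, hu1] at h'
          simp only [List.length_append, List.length_cons, List.length_nil] at h'
          omega
        have hIL := hprefIL _ hz'p hz'ne (by simp)
        have hsub : (p ++ [b]) <:+ (x ++ p ++ [b]) := ⟨x, by simp⟩
        have hne1 : p ++ [b] ≠ x ++ p ++ [b] := by
          intro h
          have h' := congrArg List.length h
          simp only [List.length_append, List.length_cons, List.length_nil] at h'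
          omega
        have hprec := hIL.2 _ hsub hne1 (by simp)
        have hpaz : p ++ [a] <+: z := ⟨s, by simp [hz1]⟩
        have hpaz' : p ++ [a] <+: (x ++ p ++ [b]) :=
          List.prefix_of_prefix_length_le hpaz hz'p
            (by simp only [List.length_append, List.length_cons, List.length_nil]; omega)
        obtain ⟨s'', hs''⟩ := hpaz'
        have hlex2 : List.Lex (· < ·) (x ++ p ++ [b]) (p ++ [b]) := by
          rw [← hs'']
          have e1 : p ++ [a] ++ s'' = p ++ a :: s'' := by simp
          have e2 : p ++ [b] = p ++ b :: ([] : List α) := by simp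
          rw [e1, e2]
          exact lex_append_cons p hab _ _
        exact absurd hlex2 (asymm (show List.Lex (· < ·) (p ++ [b]) (x ++ p ++ [b]) from hprec))
  -- existence of a bad suffix
  have hbadex : ∃ u : List α, u <:+ z ∧ u ≠ z ∧ u ≠ [] ∧ List.Lex (· < ·) z u := by
    have h1 : ¬ ∀ s : List α, s <:+ z → s ≠ z → s ≠ [] → Prec s z := fun h => hzn ⟨hzne, h⟩
    push_neg at h1
    obtain ⟨u, h2, h3, h4, h5⟩ := h1
    rcases (trichotomous u z :
        List.Lex (· < ·) u z ∨ u = z ∨ List.Lex (· < ·) z u) with h | h | h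
    · exact absurd h h5
    · exact absurd h h3
    · exact ⟨u, h2, h3, h4, h⟩
  -- minimal bad suffix
  obtain ⟨n, ⟨u₀, hu₀, hlen⟩, hnmin⟩ := Nat.lt_wfRel.wf.has_min
    {n | ∃ u : List α, (u <:+ z ∧ u ≠ z ∧ u ≠ [] ∧ List.Lex (· < ·) z u) ∧ u.length = n}
    ⟨_, hbadex.choose, hbadex.choose_spec, rfl⟩
  subst hlen
  have hminlen : ∀ v : List α, v <:+ z → v ≠ z → v ≠ [] → List.Lex (· < ·) z v →
      u₀.length ≤ v.length := by
    intro v h1 h2 h3 h4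
    by_contra h
    push_neg at h
    exact hnmin v.length ⟨v, ⟨h1, h2, h3, h4⟩, rfl⟩ h
  obtain ⟨hs₀, hne₀, hnil₀, hlex₀⟩ := hu₀
  obtain ⟨p, a, b, hu₀e, hab, hpa⟩ := hkey u₀ hs₀ hne₀ hnil₀ hlex₀
  obtain ⟨x, hx⟩ := hs₀
  have hxne : x ≠ [] := by rintro rfl; simp at hx; exact hne₀ hx
  have hxlen : 1 ≤ x.length := List.length_pos_iff.mpr hxne
  have hzx : z = x ++ p ++ [b] := by rw [← hx, hu₀e]; simp
  have hpz : p <+: z := (List.prefix_append p [a]).trans hpa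
  have hu₀len : u₀.length = p.length + 1 := by rw [hu₀e]; simp
  -- the prefix p ++ [a] must fit inside x
  have hfit : p.length + 1 ≤ x.length := by
    by_contra hxl
    push_neg at hxl
    have hxp : x <+: p :=
      List.prefix_of_prefix_length_le ⟨p ++ [b], by rw [hzx]; simp⟩ hpz (by omega)
    obtain ⟨p₂, hp₂⟩ := hxp
    have hp₂len : x.length + p₂.length = p.length := by
      have h' := congrArg List.length hp₂
      simpa using h'
    have h1 : p₂ ++ [a] <+: p ++ [b] := by
      have h2 : x ++ (p₂ ++ [a]) <+: x ++ (p ++ [b]) := by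
        have e1 : x ++ (p₂ ++ [a]) = p ++ [a] := by rw [← hp₂]; simp
        have e2 : x ++ (p ++ [b]) = z := by rw [hzx]; simp
        rw [e1, e2]; exact hpa
      exact (List.prefix_append_right_inj x).mp h2
    have h2 : p₂ ++ [a] <+: p :=
      List.prefix_of_prefix_length_le h1 (List.prefix_append p [b])
        (by simp only [List.length_append, List.length_cons, List.length_nil]; omega)
    have h3 : p₂ ++ [a] <+: z := h2.trans hpz
    have hsuf : (p₂ ++ [b]) <:+ z := ⟨x ++ x, by rw [hzx, ← hp₂]; simp⟩
    have hzlen : z.length = x.length + p.length + 1 := by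
      rw [hzx]
      simp only [List.length_append, List.length_cons, List.length_nil]
    have hnez : p₂ ++ [b] ≠ z := by
      intro h
      have h' := congrArg List.length h
      simp only [List.length_append, List.length_cons, List.length_nil, hzlen] at h'
      try omega
    obtain ⟨s₃, hs₃⟩ := h3
    have hlex3 : List.Lex (· < ·) z (p₂ ++ [b]) := by
      rw [← hs₃]
      have e1 : p₂ ++ [a] ++ s₃ = p₂ ++ a :: s₃ := by simp
      have e2 : p₂ ++ [b] = p₂ ++ b :: ([] : List α) := by simp
      rw [e1, e2]
      exact lex_append_cons p₂ hab _ _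
    have h4 := hminlen (p₂ ++ [b]) hsuf hnez (by simp) hlex3
    simp only [hu₀len, List.length_append, List.length_cons, List.length_nil] at h4
    omega
  -- extract s from x
  have hxpref : x <+: z := ⟨p ++ [b], by rw [hzx]; simp⟩
  have hpax : p ++ [a] <+: x :=
    List.prefix_of_prefix_length_le hpa hxpref
      (by simp only [List.length_append, List.length_cons, List.length_nil]; omega)
  obtain ⟨s, hs⟩ := hpax
  refine ⟨p, s, a, b, hab, ?_, ?_, ?_⟩
  · rw [hzx, ← hs]; try simp
  · -- minimality of r
    intro r' s' a' b' hab' heq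
    have hsuf : (r' ++ [b']) <:+ z := ⟨r' ++ [a'] ++ s', by rw [heq]; simp⟩
    have hzlen : z.length = r'.length + 1 + s'.length + r'.length + 1 := by
      rw [heq]
      simp only [List.length_append, List.length_cons, List.length_nil]
      try omega
    have hnez : r' ++ [b'] ≠ z := by
      intro h
      have h' := congrArg List.length h
      simp only [List.length_append, List.length_cons, List.length_nil, hzlen] at h'
      try omega
    have hlex' : List.Lex (· < ·) z (r' ++ [b']) := by
      have e1 : z = r' ++ a' :: (s' ++ r' ++ [b']) := by rw [heq]; simp
      have e2 : r' ++ [b'] = r' ++ b' :: ([] : List α) := by simp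
      rw [e1, e2]
      exact lex_append_cons r' hab' _ _
    have h4 := hminlen (r' ++ [b']) hsuf hnez (by simp) hlex'
    simp only [hu₀len, List.length_append, List.length_cons, List.length_nil] at h4
    omega
  · -- IsInvLyndon (p ++ [b])
    refine ⟨by simp, ?_⟩
    intro t hts htne htnil
    have htc : t = t.dropLast ++ [t.getLast htnil] := (List.dropLast_append_getLast htnil).symm
    obtain ⟨y, hy⟩ := hts
    have hts' : t <:+ (p ++ [b]) := ⟨y, hy⟩
    have hyy : (y ++ t.dropLast) ++ [t.getLast htnil] = p ++ [b] := by
      rw [List.append_assoc, ← htc]; exact hy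
    have hinj := List.append_inj' hyy (by simp)
    have hcb : t.getLast htnil = b := by simpa using hinj.2
    set t₁ := t.dropLast with ht₁def
    have ht' : t = t₁ ++ [b] := by rw [htc, hcb]
    have ht₁p : t₁ <:+ p := ⟨y, hinj.1⟩
    have ht₁len : t₁.length + 1 ≤ p.length := by
      have h1 : t₁.length ≤ p.length := ht₁p.length_le
      have h2 : t₁.length ≠ p.length := by
        intro h
        exact htne (hts'.eq_of_length (by simp [ht', h]))
      omega
    rw [ht'] at htne htnil ⊢
    have hzlen : z.length = 2 * p.length + s.length + 2 := by
      rw [hzx, ← hs]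
      simp only [List.length_append, List.length_cons, List.length_nil]
      try omega
    have hpbz : (p ++ [b]) <:+ z := ⟨x, by rw [hzx]; simp⟩
    have htpb : (t₁ ++ [b]) <:+ (p ++ [b]) := ⟨y, by rw [← List.append_assoc, hinj.1]⟩
    have htz : (t₁ ++ [b]) <:+ z := htpb.trans hpbz
    have htnez : t₁ ++ [b] ≠ z := by
      intro h
      have h' := congrArg List.length h
      simp only [List.length_append, List.length_cons, List.length_nil, hzlen] at h'
      try omega
    have hnotbad : ¬ List.Lex (· < ·) z (t₁ ++ [b]) := by
      intro h
      have h4 := hminlen (t₁ ++ [b]) htz htnez (by simp) h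
      simp only [hu₀len, List.length_append, List.length_cons, List.length_nil] at h4
      omega
    have hlt : List.Lex (· < ·) (t₁ ++ [b]) z := by
      rcases (trichotomous (t₁ ++ [b]) z :
          List.Lex (· < ·) (t₁ ++ [b]) z ∨ t₁ ++ [b] = z ∨ List.Lex (· < ·) z (t₁ ++ [b]))
        with h | h | h
      · exact h
      · exact absurd h htnez
      · exact absurd h hnotbad
    show List.Lex (· < ·) (t₁ ++ [b]) (p ++ [b])
    rcases lex_cases hlt with ⟨hp', hne'⟩ | ⟨q, c, d, s₄, s₅, he1, he2, hcd⟩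
    · have htp : (t₁ ++ [b]) <+: p :=
        List.prefix_of_prefix_length_le hp' hpz
          (by simp only [List.length_append, List.length_cons, List.length_nil]; omega)
      exact lex_of_prefix_ne (htp.trans (List.prefix_append p [b])) htne
    · have hqd : q ++ [d] <+: z := ⟨s₅, by simp [he2]⟩
      have hqlen : q.length + 1 ≤ t₁.length + 1 := by
        have h' := congrArg List.length he1
        simp only [List.length_append, List.length_cons, List.length_nil] at h'
        omega
      have hqp : q ++ [d] <+: p :=
        List.prefix_of_prefix_length_le hqd hpz
          (by simp only [List.length_append, List.length_cons, List.length_nil]; omega)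
      obtain ⟨s₆, hs₆⟩ := hqp
      have e2 : p ++ [b] = q ++ d :: (s₆ ++ [b]) := by rw [← hs₆]; simp
      rw [he1, e2]
      exact lex_append_cons q hcd _ _
end

section
/- Let x be a nonempty word and w = x^n p a sesquipower of x (p a proper prefix of x, n ≥ 1), where x is a Lyndon word with respect to the inverse lexicographic order (anti-Lyndon). Then w is an inverse Lyndon word. -/
open List

variable {α : Type*} [LinearOrder α]

/-- A proper prefix is lexicographically smaller. -/
lemma join_cons' (l : List α) (L : List (List α)) : (l :: L).flatten = l ++ L.flatten := rfl

lemma join_append' (L₁ L₂ : List (List α)) : (L₁ ++ L₂).flatten = L₁.flatten ++ L₂.flatten :=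
  List.flatten_append


lemma prec_of_prefix {s w : List α} (h : s <+: w) (hne : s ≠ w) : Prec s w := by
  induction s generalizing w with
  | nil =>
    cases w with
    | nil => exact absurd rfl hne
    | cons a t => exact List.Lex.nil
  | cons a s ih =>
    obtain ⟨t, ht⟩ := h
    cases w with
    | nil => simp at ht
    | cons b u =>
      rw [List.cons_append, List.cons.injEq] at ht
      obtain ⟨rfl, hu⟩ := ht
      exact List.Lex.cons (ih ⟨t, hu⟩ (fun h => hne (by rw [h])))

/-- A strict character difference after a common prefix gives `Prec`,
whatever follows. -/
lemma lex_cons_append {b a : α} (hba : b < a) (c u v : List α) :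
    Prec (c ++ b :: u) (c ++ a :: v) := by
  induction c with
  | nil => exact List.Lex.rel hba
  | cons d c ih => exact List.Lex.cons ih

/-- If `x` is greater than the shorter word `v` in the inverse order, then they
have a common prefix followed by a strict character difference. -/
lemma keylem {x v : List α} (h : PrecIn x v) (hl : v.length < x.length) :
    ∃ (c : List α) (a b : α) (x' v' : List α),
      x = c ++ a :: x' ∧ v = c ++ b :: v' ∧ b < a := by
  unfold PrecIn at h
  induction h with
  | nil => simp at hl
  | @cons a l₁ l₂ h ih =>
    obtain ⟨c, a', b', x', v', h1, h2, h3⟩ := ih (by simpa using hl)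
    exact ⟨a :: c, a', b', x', v', by simp [h1], by simp [h2], h3⟩
  | @rel a l₁ b l₂ h => exact ⟨[], a, b, l₁, l₂, rfl, rfl, h⟩

/-- Decomposition of a suffix of `x^n`. -/
lemma suffix_join_replicate (x : List α) (hx : x ≠ []) :
    ∀ n, ∀ u : List α, u <:+ (List.replicate n x).flatten →
      ∃ j, j ≤ n ∧ ∃ v, v <:+ x ∧ v ≠ x ∧
        u = v ++ (List.replicate j x).flatten := by
  intro n
  induction n with
  | zero =>
    intro u hu
    simp only [List.replicate_zero, List.flatten_nil] at hu
    rw [List.suffix_nil] at hu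
    exact ⟨0, le_rfl, [], List.nil_suffix, Ne.symm hx, by simp [hu]⟩
  | succ m ih =>
    intro u hu
    rw [List.replicate_succ, join_cons'] at hu
    obtain ⟨t, ht⟩ := hu
    rcases List.append_eq_append_iff.mp ht with ⟨a', hxa, hua⟩ | ⟨c', _, hJ⟩
    · by_cases ha : a' = x
      · subst ha
        refine ⟨m + 1, le_rfl, [], List.nil_suffix, Ne.symm hx, ?_⟩
        rw [hua, List.replicate_succ, join_cons', List.nil_append]
      · exact ⟨m, Nat.le_succ m, a', ⟨t, hxa.symm⟩, ha, hua⟩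
    · obtain ⟨j, hj, v, hv1, hv2, hv3⟩ := ih u ⟨c', hJ.symm⟩
      exact ⟨j, hj.trans (Nat.le_succ m), v, hv1, hv2, hv3⟩

theorem stmt18 (x p : List α) (n : ℕ) (hn : 1 ≤ n)
    (hx : IsAntiLyndon x) (hp : p <+: x) (hpx : p ≠ x) :
    IsInvLyndon ((List.replicate n x).flatten ++ p) := by
  obtain ⟨hxne, hxL⟩ := hx
  obtain ⟨m, rfl⟩ : ∃ m, n = m + 1 := ⟨n - 1, by omega⟩
  have hwx : (List.replicate (m + 1) x).flatten ++ p
      = x ++ ((List.replicate m x).flatten ++ p) := by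
    rw [List.replicate_succ, join_cons', List.append_assoc]
  have hxw : x <+: (List.replicate (m + 1) x).flatten ++ p := ⟨_, hwx.symm⟩
  -- proper suffix of x is strictly shorter
  have hsufflen : ∀ v : List α, v <:+ x → v ≠ x → v.length < x.length := by
    intro v hv hvne
    rcases lt_or_eq_of_le hv.length_le with h | h
    · exact h
    · exact absurd (hv.eq_of_length h) hvne
  -- main helper : a word starting with a nonempty proper suffix v of x
  have hmain : ∀ (v rest : List α), v <:+ x → v ≠ x → v ≠ [] →
      Prec (v ++ rest) ((List.replicate (m + 1) x).flatten ++ p) := by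
    intro v rest hv hvx hvnil
    have hpi : PrecIn x v := hxL v hv hvx hvnil
    obtain ⟨c, a, b, x', v', hx1, hv1, hba⟩ := keylem hpi (hsufflen v hv hvx)
    have hww : (List.replicate (m + 1) x).flatten ++ p
        = c ++ a :: (x' ++ ((List.replicate m x).flatten ++ p)) := by
      rw [hwx, hx1]; simp [List.append_assoc]
    rw [hww, hv1, List.append_assoc, List.cons_append]
    exact lex_cons_append hba c _ _
  constructor
  · rw [hwx]
    intro h
    exact hxne (List.append_eq_nil_iff.mp h).1
  · intro s hs hsw hsnil
    obtain ⟨t, ht⟩ := hs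
    rcases List.append_eq_append_iff.mp ht with ⟨a', hJa, hsa⟩ | ⟨c', _, hps⟩
    · -- s = a' ++ p with a' a suffix of x^(m+1)
      obtain ⟨j, hj, v, hv1, hv2, hv3⟩ :=
        suffix_join_replicate x hxne (m + 1) a' ⟨t, hJa.symm⟩
      subst hv3
      by_cases hvnil : v = []
      · -- s = x^j ++ p is a proper prefix of w
        subst hvnil
        rw [List.nil_append] at hsa
        have hjm : j ≤ m := by
          by_contra h
          have hje : j = m + 1 := by omega
          exact hsw (by rw [hsa, hje])
        obtain ⟨q, hq⟩ := hp
        have e1 : (List.replicate (j + 1) x).flatten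
            = (List.replicate j x).flatten ++ x := by
          rw [List.replicate_succ', join_append']
          simp
        have e2 : List.replicate (m + 1) x
            = List.replicate (j + 1) x ++ List.replicate (m - j) x := by
          rw [← List.replicate_add]
          congr 1
          omega
        have hpre : s <+: (List.replicate (m + 1) x).flatten ++ p := by
          refine ⟨q ++ ((List.replicate (m - j) x).flatten ++ p), ?_⟩
          rw [hsa, e2, join_append', e1]
          simp only [List.append_assoc]
          rw [← hq]
          simp [List.append_assoc]
        exact prec_of_prefix hpre hsw
      · rw [hsa, List.append_assoc]
        exact hmain v _ hv1 hv2 hvnil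
    · -- s is a suffix of p
      by_cases hc : c' = []
      · -- s = p, a proper prefix of w
        subst hc
        rw [List.nil_append] at hps
        subst hps
        exact prec_of_prefix (hp.trans hxw) hsw
      · -- s is an internal factor of x
        obtain ⟨q, hq⟩ := hp
        have hvsuff : s ++ q <:+ x := ⟨c', by rw [← List.append_assoc, ← hps, hq]⟩
        have hvx : s ++ q ≠ x := by
          intro h
          have hx' : x.length = c'.length + (s ++ q).length := by
            conv_lhs => rw [← hq, hps]
            simp [List.length_append]
          have hc' : c'.length ≠ 0 := fun h0 => hc (List.length_eq_zero_iff.mp h0)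
          rw [h] at hx'
          omega
        have hvnil : s ++ q ≠ [] := fun h => hsnil (List.append_eq_nil_iff.mp h).1
        have hpi : PrecIn x (s ++ q) := hxL _ hvsuff hvx hvnil
        obtain ⟨c, a, b, x', v', hx1, hv1, hba⟩ :=
          keylem hpi (hsufflen _ hvsuff hvx)
        have hww : (List.replicate (m + 1) x).flatten ++ p
            = c ++ a :: (x' ++ ((List.replicate m x).flatten ++ p)) := by
          rw [hwx, hx1]; simp [List.append_assoc]
        rcases List.append_eq_append_iff.mp hv1 with ⟨a2, hca, hv2⟩ | ⟨c2, hsc, hv2⟩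
        · -- c = s ++ a2 : s is a prefix of c, hence of x, hence of w
          have hsx : s <+: x :=
            (show s <+: c from ⟨a2, hca.symm⟩).trans ⟨a :: x', by rw [hx1]⟩
          exact prec_of_prefix (hsx.trans hxw) hsw
        · cases c2 with
          | nil =>
            rw [List.append_nil] at hsc
            have hsx : s <+: x := ⟨a :: x', by rw [hsc, hx1]⟩
            exact prec_of_prefix (hsx.trans hxw) hsw
          | cons d c2 =>
            rw [List.cons_append, List.cons.injEq] at hv2
            obtain ⟨rfl, _⟩ := hv2
            rw [hsc, hww]
            exact lex_cons_append hba c c2 _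
end
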